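/- Let L be a positive integer and let V ⊂ ℝ^L be a real linear subspace with dim V ≤ L − 2. Then for every ε > 0 there exists δ > 0 such that for every z ∈ ℝ^L, the Lebesgue measure of B(z,1) ∩ T_δ(V) is at most ε times the Lebesgue measure of B(z,1), where T_δ(V) = {x ∈ ℝ^L : dist(x,V) < δ} is the open δ-neighborhood of V and B(z,1) is the open unit ball centered at z. -/

import Mathlib

open Metric Set MeasureTheory ENNReal

open scoped RealInnerProductSpace

/-- Let `V ⊆ ℝ^L` be a linear subspace of codimension at least `2`
(i.e. `dim V ≤ L - 2`). For every `ε > 0` there is `δ > 0` such that for every `z ∈ ℝ^L`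
the Lebesgue measure of `B(z,1) ∩ T_δ(V)` is at most `ε` times that of `B(z,1)`. -/
theorem volume_thickening_subspace_le
    (L : ℕ) (hL : 0 < L)
    (V : Submodule ℝ (EuclideanSpace ℝ (Fin L)))
    (hV : Module.finrank ℝ V + 2 ≤ L) :
    ∀ ε : ℝ, 0 < ε →
      ∃ δ : ℝ, 0 < δ ∧
        ∀ z : EuclideanSpace ℝ (Fin L),
          volume (Metric.ball z 1 ∩ Metric.thickening δ (V : Set (EuclideanSpace ℝ (Fin L)))) ≤
            ENNReal.ofReal ε * volume (Metric.ball z 1) := by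
  intro ε hε
  set E := EuclideanSpace ℝ (Fin L)
  have hL2 : 2 ≤ L := by omega
  -- two orthonormal vectors in `Vᗮ`
  have hfr : 2 ≤ Module.finrank ℝ Vᗮ := by
    have h1 := Submodule.finrank_add_finrank_orthogonal V
    have h2 : Module.finrank ℝ (EuclideanSpace ℝ (Fin L)) = L := finrank_euclideanSpace_fin
    omega
  set bb := stdOrthonormalBasis ℝ ↥Vᗮ with hbbdef
  have hbb := orthonormal_iff_ite.mp bb.orthonormal
  set j0 : Fin (Module.finrank ℝ ↥Vᗮ) := ⟨0, by omega⟩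
  set j1 : Fin (Module.finrank ℝ ↥Vᗮ) := ⟨1, by omega⟩
  set u : E := (bb j0 : E) with hudef
  set w : E := (bb j1 : E) with hwdef
  have hu : u ∈ Vᗮ := (bb j0).2
  have hw : w ∈ Vᗮ := (bb j1).2
  have hj01 : j0 ≠ j1 := by simp [j0, j1, Fin.ext_iff]
  have huu : ⟪u, u⟫ = 1 := by
    have := hbb j0 j0; rwa [Submodule.coe_inner, if_pos rfl] at this
  have hww : ⟪w, w⟫ = 1 := by
    have := hbb j1 j1; rwa [Submodule.coe_inner, if_pos rfl] at this
  have huw : ⟪u, w⟫ = 0 := by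
    have := hbb j0 j1; rwa [Submodule.coe_inner, if_neg hj01] at this
  have hwu : ⟪w, u⟫ = 0 := by rw [real_inner_comm]; exact huw
  -- extend to an orthonormal basis of `E`
  set i0 : Fin L := ⟨0, by omega⟩
  set i1 : Fin L := ⟨1, by omega⟩
  have hi01 : i0 ≠ i1 := by simp [i0, i1, Fin.ext_iff]
  set v : Fin L → E := fun i => if i = i0 then u else w with hvdef
  have hcard : Module.finrank ℝ E = Fintype.card (Fin L) := by
    rw [Fintype.card_fin]; exact finrank_euclideanSpace_fin
  have hv : Orthonormal ℝ (({i0, i1} : Set (Fin L)).restrict v) := by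
    rw [orthonormal_iff_ite]
    rintro ⟨i, hi⟩ ⟨j, hj⟩
    have hi' : i = i0 ∨ i = i1 := hi
    have hj' : j = i0 ∨ j = i1 := hj
    simp only [Set.restrict_apply, Subtype.mk.injEq]
    rcases hi' with rfl | rfl <;> rcases hj' with rfl | rfl <;>
      simp [hvdef, Set.restrict, hi01, hi01.symm, huu, hww, huw, hwu,
        (by nlinarith [huu, real_inner_self_eq_norm_sq u, norm_nonneg u] : ‖u‖ = 1),
        (by nlinarith [hww, real_inner_self_eq_norm_sq w, norm_nonneg w] : ‖w‖ = 1)]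
  obtain ⟨b, hb⟩ := hv.exists_orthonormalBasis_extension_of_card_eq hcard
  have hb0 : b i0 = u := by
    have := hb i0 (by simp); simpa [hvdef] using this
  have hb1 : b i1 = w := by
    have := hb i1 (by simp); simpa [hvdef, hi01.symm] using this
  -- choice of δ
  set c : ℝ≥0∞ := volume (Metric.ball (0 : E) 1) with hcdef
  have hc0 : c ≠ 0 := (measure_ball_pos _ _ one_pos).ne'
  have hcT : c ≠ ⊤ := measure_ball_lt_top.ne
  set R : ℝ := (ENNReal.ofReal ε * c).toReal with hRdef
  have hR : 0 < R := ENNReal.toReal_pos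
    (mul_ne_zero (ENNReal.ofReal_pos.mpr hε).ne' hc0)
    (ENNReal.mul_ne_top ENNReal.ofReal_ne_top hcT)
  set s : ℝ := R / 2 ^ (L + 2) with hsdef
  have hs : 0 < s := div_pos hR (by positivity)
  set δ : ℝ := min 1 (Real.sqrt s) with hδdef
  have hδ : 0 < δ := lt_min one_pos (Real.sqrt_pos.mpr hs)
  have hδ1 : δ ≤ 1 := min_le_left _ _
  have hδsq : 2 * δ * (2 * δ) * 2 ^ L ≤ R := by
    have h1 : δ ≤ Real.sqrt s := min_le_right _ _
    have h2 : δ * δ ≤ s := by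
      calc δ * δ ≤ Real.sqrt s * Real.sqrt s :=
            mul_le_mul h1 h1 hδ.le (Real.sqrt_nonneg _)
        _ = s := Real.mul_self_sqrt hs.le
    have h3 : (2 : ℝ) ^ (L + 2) = 2 ^ L * 4 := by ring
    have h4 : s * (2 ^ L * 4) = R := by
      rw [hsdef, h3, div_mul_cancel₀]
      positivity
    nlinarith [pow_pos (by norm_num : (0:ℝ) < 2) L]
  refine ⟨δ, hδ, fun z => ?_⟩
  -- the box
  set g : Fin L → Set ℝ := fun i =>
    if i = i0 ∨ i = i1 then Ioo (-δ) δ else Ioo (b.repr z i - 1) (b.repr z i + 1) with hgdef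
  have hgmeas : MeasurableSet (Set.pi Set.univ g) := by
    apply MeasurableSet.univ_pi
    intro i
    by_cases h : i = i0 ∨ i = i1 <;> simp [hgdef, h, measurableSet_Ioo]
  -- subset
  have hsub : Metric.ball z 1 ∩ Metric.thickening δ (V : Set E) ⊆
      b.repr ⁻¹' (WithLp.ofLp ⁻¹' Set.pi Set.univ g) := by
    rintro x ⟨hxB, hxT⟩ i _
    by_cases h : i = i0 ∨ i = i1
    · simp only [hgdef, if_pos h]
      obtain ⟨p, hpV, hpd⟩ := Metric.mem_thickening_iff.mp hxT
      have hbi : b i ∈ Vᗮ := by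
        rcases h with rfl | rfl
        · rw [hb0]; exact hu
        · rw [hb1]; exact hw
      have hip : ⟪b i, p⟫ = 0 := by
        rw [real_inner_comm]; exact hbi p hpV
      have : b.repr x i = ⟪b i, x - p⟫ := by
        rw [b.repr_apply_apply, inner_sub_right, hip, sub_zero]
      have habs : |b.repr x i| < δ := by
        rw [this]
        calc |⟪b i, x - p⟫| ≤ ‖b i‖ * ‖x - p‖ := abs_real_inner_le_norm _ _
          _ = ‖x - p‖ := by rw [b.orthonormal.1 i, one_mul]
          _ < δ := by rwa [← dist_eq_norm]
      exact abs_lt.mp habs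
    · simp only [hgdef, if_neg h]
      have : b.repr x i - b.repr z i = ⟪b i, x - z⟫ := by
        rw [b.repr_apply_apply, b.repr_apply_apply, inner_sub_right]
      have habs : |b.repr x i - b.repr z i| < 1 := by
        rw [this]
        calc |⟪b i, x - z⟫| ≤ ‖b i‖ * ‖x - z‖ := abs_real_inner_le_norm _ _
          _ = ‖x - z‖ := by rw [b.orthonormal.1 i, one_mul]
          _ < 1 := by rwa [← dist_eq_norm, ← Metric.mem_ball]
      rw [abs_sub_lt_iff] at habs
      constructor <;> linarith [habs.1, habs.2]
  -- volume computation
  have hgmeasPi : MeasurableSet (Set.pi Set.univ g : Set (Fin L → ℝ)) := by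
    apply MeasurableSet.univ_pi
    intro i
    by_cases h : i = i0 ∨ i = i1 <;> simp [hgdef, h, measurableSet_Ioo]
  have key : volume (b.repr ⁻¹' (WithLp.ofLp ⁻¹' Set.pi Set.univ g)) = ∏ i, volume (g i) := by
    rw [b.measurePreserving_repr.measure_preimage
      (hgmeasPi.preimage (PiLp.volume_preserving_ofLp (Fin L)).measurable).nullMeasurableSet]
    have h2 := (PiLp.volume_preserving_ofLp (Fin L)).measure_preimage
      hgmeasPi.nullMeasurableSet
    rw [h2, volume_pi_pi]
  have hgi01 : volume (g i0) = ENNReal.ofReal (2 * δ) := by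
    simp only [hgdef, if_pos (Or.inl rfl), Real.volume_Ioo]
    ring_nf
  have hgi1 : volume (g i1) = ENNReal.ofReal (2 * δ) := by
    simp only [hgdef, if_pos (Or.inr rfl), Real.volume_Ioo]
    ring_nf
  have hgle : ∀ i, volume (g i) ≤ 2 := by
    intro i
    by_cases h : i = i0 ∨ i = i1
    · simp only [hgdef, if_pos h, Real.volume_Ioo]
      rw [show (2 : ℝ≥0∞) = ENNReal.ofReal 2 by simp]
      apply ENNReal.ofReal_le_ofReal
      linarith
    · simp only [hgdef, if_neg h, Real.volume_Ioo]
      rw [show b.repr z i + 1 - (b.repr z i - 1) = (2 : ℝ) by ring]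
      simp
  have hprod : ∏ i, volume (g i) ≤
      ENNReal.ofReal (2 * δ) * (ENNReal.ofReal (2 * δ) * 2 ^ L) := by
    rw [← Finset.mul_prod_erase Finset.univ _ (Finset.mem_univ i0)]
    rw [← Finset.mul_prod_erase _ _
      (Finset.mem_erase.mpr ⟨hi01.symm, Finset.mem_univ i1⟩)]
    rw [hgi01, hgi1]
    refine mul_le_mul_right (mul_le_mul_right ?_ _) _
    calc ∏ i ∈ (Finset.univ.erase i0).erase i1, volume (g i)
        ≤ ∏ _i ∈ (Finset.univ.erase i0).erase i1, (2 : ℝ≥0∞) :=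
          Finset.prod_le_prod' fun i _ => hgle i
      _ = (2 : ℝ≥0∞) ^ ((Finset.univ.erase i0).erase i1).card := by
          rw [Finset.prod_const]
      _ ≤ (2 : ℝ≥0∞) ^ L := by
          apply pow_le_pow_right₀ one_le_two
          calc ((Finset.univ.erase i0).erase i1).card ≤ Finset.univ.card :=
                Finset.card_le_card (fun i hi => Finset.mem_univ i)
            _ = L := by simp
  have hfinal : ENNReal.ofReal (2 * δ) * (ENNReal.ofReal (2 * δ) * 2 ^ L) ≤
      ENNReal.ofReal ε * c := by
    have h2L : (2 : ℝ≥0∞) ^ L = ENNReal.ofReal ((2 : ℝ) ^ L) := by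
      rw [ENNReal.ofReal_pow (by norm_num)]
      norm_num
    rw [h2L, ← ENNReal.ofReal_mul (by positivity), ← ENNReal.ofReal_mul (by positivity),
      ← mul_assoc]
    calc ENNReal.ofReal (2 * δ * (2 * δ) * 2 ^ L) ≤ ENNReal.ofReal R :=
          ENNReal.ofReal_le_ofReal hδsq
      _ = ENNReal.ofReal ε * c := by
          rw [hRdef, ENNReal.ofReal_toReal (ENNReal.mul_ne_top ENNReal.ofReal_ne_top hcT)]
  have hball : volume (Metric.ball z 1) = c := Measure.addHaar_ball_center volume z 1
  calc volume (Metric.ball z 1 ∩ Metric.thickening δ (V : Set E))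
      ≤ volume (b.repr ⁻¹' (WithLp.ofLp ⁻¹' Set.pi Set.univ g)) := measure_mono hsub
    _ = ∏ i, volume (g i) := key
    _ ≤ ENNReal.ofReal (2 * δ) * (ENNReal.ofReal (2 * δ) * 2 ^ L) := hprod
    _ ≤ ENNReal.ofReal ε * c := hfinal
    _ = ENNReal.ofReal ε * volume (Metric.ball z 1) := by rw [hball]
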